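/- For all ξ, η ∈ ℝ³, the modulation function M_{+,+}(ξ,η) = |⟨ξ-η⟩ - ⟨ξ⟩ + ⟨η⟩| satisfies M_{+,+}(ξ,η) ≥ 1/⟨ξ-η⟩ · 1/C for some absolute constant C > 0; equivalently, ⟨ξ-η⟩ · (⟨ξ-η⟩ - ⟨ξ⟩ + ⟨η⟩) ≥ c > 0 for an absolute constant c, where ⟨ζ⟩ = (1+|ζ|²)^{1/2}. -/
import Mathlib

lemma jbr_aux (u v w a b d : ℝ) (hu0 : 0 ≤ u) (hv0 : 0 ≤ v) (hw0 : 0 ≤ w)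
    (htri : w ≤ u + v) (ha0 : 0 ≤ a) (hb0 : 0 ≤ b) (hd0 : 0 ≤ d)
    (ha2 : a ^ 2 = 1 + u ^ 2) (hb2 : b ^ 2 = 1 + w ^ 2) (hd2 : d ^ 2 = 1 + v ^ 2) :
    a * (a - b + d) ≥ 1 / 2 := by
  have ha1 : 1 ≤ a := by nlinarith [ha2, sq_nonneg u]
  have hd1 : 1 ≤ d := by nlinarith [hd2, sq_nonneg v]
  have key1 : b ^ 2 ≤ a ^ 2 + d ^ 2 - 1 + 2 * (u * v) := by
    nlinarith [mul_self_nonneg (u + v - w)]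
  have key2 : 2 * a ^ 2 * (u * v) ≤ a * d * (2 * a ^ 2 - 1) := by
    have h2a : (1:ℝ) ≤ 2 * a ^ 2 - 1 := by nlinarith [mul_self_nonneg (a - 1), ha1]
    have hrhs : 0 ≤ a * d * (2 * a ^ 2 - 1) :=
      mul_nonneg (mul_nonneg ha0 hd0) (by linarith)
    have hlhs : 0 ≤ 2 * a ^ 2 * (u * v) := by positivity
    have expand : (a * d * (2 * a ^ 2 - 1)) ^ 2 - (2 * a ^ 2 * (u * v)) ^ 2
        = (1 + u ^ 2) * ((1 + 2 * u ^ 2) ^ 2 + v ^ 2) := by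
      have e : (a * d * (2 * a ^ 2 - 1)) ^ 2 - (2 * a ^ 2 * (u * v)) ^ 2
          = (a ^ 2) * (d ^ 2) * (2 * (a ^ 2) - 1) ^ 2
            - 4 * (a ^ 2) ^ 2 * (u ^ 2 * v ^ 2) := by ring
      rw [e, ha2, hd2]; ring
    have hpos : 0 ≤ (1 + u ^ 2) * ((1 + 2 * u ^ 2) ^ 2 + v ^ 2) := by positivity
    have hsq : (2 * a ^ 2 * (u * v)) ^ 2 ≤ (a * d * (2 * a ^ 2 - 1)) ^ 2 := by linarith
    calc 2 * a ^ 2 * (u * v) = Real.sqrt ((2 * a ^ 2 * (u * v)) ^ 2) := by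
          rw [Real.sqrt_sq hlhs]
      _ ≤ Real.sqrt ((a * d * (2 * a ^ 2 - 1)) ^ 2) := Real.sqrt_le_sqrt hsq
      _ = a * d * (2 * a ^ 2 - 1) := Real.sqrt_sq hrhs
  have hab : a * b ≤ a * (a + d) - 1 / 2 := by
    have had1 : 1 ≤ a * d := by
      nlinarith [mul_nonneg (by linarith : (0:ℝ) ≤ a - 1) (by linarith : (0:ℝ) ≤ d - 1)]
    have ha21 : 1 ≤ a ^ 2 := by nlinarith [mul_self_nonneg (a - 1)]
    have hrhs : (0:ℝ) ≤ a * (a + d) - 1 / 2 := by nlinarith [had1, ha21]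
    have hlhs : 0 ≤ a * b := mul_nonneg ha0 hb0
    have h1 : a ^ 2 * b ^ 2 ≤ a ^ 2 * (a ^ 2 + d ^ 2 - 1) + 2 * a ^ 2 * (u * v) := by
      have := mul_le_mul_of_nonneg_left key1 (sq_nonneg a)
      nlinarith [this]
    have e2 : (a * (a + d) - 1 / 2) ^ 2
        = a ^ 2 * (a ^ 2 + d ^ 2 - 1) + a * d * (2 * a ^ 2 - 1) + 1 / 4 := by ring
    have e3 : (a * b) ^ 2 = a ^ 2 * b ^ 2 := by ring
    have hsq : (a * b) ^ 2 ≤ (a * (a + d) - 1 / 2) ^ 2 := by linarith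
    calc a * b = Real.sqrt ((a * b) ^ 2) := by rw [Real.sqrt_sq hlhs]
      _ ≤ Real.sqrt ((a * (a + d) - 1 / 2) ^ 2) := Real.sqrt_le_sqrt hsq
      _ = a * (a + d) - 1 / 2 := Real.sqrt_sq hrhs
  nlinarith [hab]

/-- The Japanese bracket ⟨ξ⟩ = (1 + |ξ|²)^{1/2}. -/
noncomputable def jbr (ξ : EuclideanSpace ℝ (Fin 3)) : ℝ := Real.sqrt (1 + ‖ξ‖ ^ 2)

theorem modulation_plus_plus_lower_bound :
    ∃ c : ℝ, 0 < c ∧ ∀ ξ η : EuclideanSpace ℝ (Fin 3),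
      jbr (ξ - η) * (jbr (ξ - η) - jbr ξ + jbr η) ≥ c := by
  refine ⟨1/2, by norm_num, fun ξ η => ?_⟩
  have htri : ‖ξ‖ ≤ ‖ξ - η‖ + ‖η‖ := by
    have h : ξ = (ξ - η) + η := by abel
    calc ‖ξ‖ = ‖(ξ - η) + η‖ := by rw [← h]
    _ ≤ ‖ξ - η‖ + ‖η‖ := norm_add_le _ _
  exact jbr_aux ‖ξ - η‖ ‖η‖ ‖ξ‖ (jbr (ξ - η)) (jbr ξ) (jbr η)
    (norm_nonneg _) (norm_nonneg _) (norm_nonneg _) htri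
    (Real.sqrt_nonneg _) (Real.sqrt_nonneg _) (Real.sqrt_nonneg _)
    (Real.sq_sqrt (by positivity)) (Real.sq_sqrt (by positivity))
    (Real.sq_sqrt (by positivity))
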